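/- Let Ψ be a quasi-hyperbolic continuous linear cocycle over a compact base 𝐁. If dim E^s is constant on all minimal sets of the base flow, then Ψ is hyperbolic on all of 𝐄. -/

import Mathlib

open Filter Topology

/-- A continuous linear cocycle (`ℝ`-action by bundle isomorphisms on the
trivial vector bundle `B × E`) over a continuous flow on `B`. -/
structure LinearCocycle (B E : Type*) [TopologicalSpace B]
    [NormedAddCommGroup E] [NormedSpace ℝ E] where
  flow : ℝ → B → B
  flow_cont : Continuous fun p : ℝ × B => flow p.1 p.2
  flow_zero : ∀ b, flow 0 b = b
  flow_add : ∀ s t b, flow s (flow t b) = flow (s + t) b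
  P : ℝ → B → E →L[ℝ] E
  P_cont : Continuous fun p : ℝ × B => P p.1 p.2
  P_zero : ∀ b, P 0 b = ContinuousLinearMap.id ℝ E
  P_comp : ∀ s t b, (P s (flow t b)).comp (P t b) = P (s + t) b

variable {B E : Type*} [TopologicalSpace B]
  [NormedAddCommGroup E] [NormedSpace ℝ E]

/-- Quasi-hyperbolicity: every nonzero vector has unbounded orbit. -/
def LinearCocycle.IsQuasiHyperbolic (Φ : LinearCocycle B E) : Prop :=
  ∀ b : B, ∀ v : E, v ≠ 0 → ∀ C : ℝ, ∃ t : ℝ, C < ‖Φ.P t b v‖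

/-- The subspace of vectors with bounded forward orbit. -/
def LinearCocycle.stable (Φ : LinearCocycle B E) (b : B) : Submodule ℝ E where
  carrier := {v | ∃ C : ℝ, ∀ t > (0:ℝ), ‖Φ.P t b v‖ ≤ C}
  add_mem' := by
    rintro u v ⟨C₁, h₁⟩ ⟨C₂, h₂⟩
    exact ⟨C₁ + C₂, fun t ht => by
      simpa [map_add] using (norm_add_le (Φ.P t b u) (Φ.P t b v)).trans
        (add_le_add (h₁ t ht) (h₂ t ht))⟩
  zero_mem' := ⟨0, fun t ht => by simp⟩
  smul_mem' := by
    rintro c v ⟨C, h⟩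
    exact ⟨‖c‖ * C, fun t ht => by
      rw [map_smul, norm_smul]
      exact mul_le_mul_of_nonneg_left (h t ht) (norm_nonneg c)⟩

/-- The subspace of vectors with bounded backward orbit. -/
def LinearCocycle.unstable (Φ : LinearCocycle B E) (b : B) : Submodule ℝ E where
  carrier := {v | ∃ C : ℝ, ∀ t > (0:ℝ), ‖Φ.P (-t) b v‖ ≤ C}
  add_mem' := by
    rintro u v ⟨C₁, h₁⟩ ⟨C₂, h₂⟩
    exact ⟨C₁ + C₂, fun t ht => by
      simpa [map_add] using (norm_add_le (Φ.P (-t) b u) (Φ.P (-t) b v)).trans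
        (add_le_add (h₁ t ht) (h₂ t ht))⟩
  zero_mem' := ⟨0, fun t ht => by simp⟩
  smul_mem' := by
    rintro c v ⟨C, h⟩
    exact ⟨‖c‖ * C, fun t ht => by
      rw [map_smul, norm_smul]
      exact mul_le_mul_of_nonneg_left (h t ht) (norm_nonneg c)⟩

/-- Uniform hyperbolicity of a linear cocycle over an invariant subset `Λ`. -/
def LinearCocycle.IsHyperbolicOn (Φ : LinearCocycle B E) (Λ : Set B) : Prop :=
  ∃ Es Eu : B → Submodule ℝ E,
    (∀ t : ℝ, ∀ b ∈ Λ, (Es b).map (Φ.P t b : E →ₗ[ℝ] E) = Es (Φ.flow t b)) ∧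
    (∀ t : ℝ, ∀ b ∈ Λ, (Eu b).map (Φ.P t b : E →ₗ[ℝ] E) = Eu (Φ.flow t b)) ∧
    (∀ b ∈ Λ, IsCompl (Es b) (Eu b)) ∧
    ∃ T > (0:ℝ), ∀ b ∈ Λ,
      (∀ v ∈ Es b, v ≠ 0 → ‖Φ.P T b v‖ < (1/2) * ‖v‖) ∧
      (∀ v ∈ Eu b, v ≠ 0 → ‖Φ.P (-T) b v‖ < (1/2) * ‖v‖)

/-- A minimal set of the base flow: a nonempty closed invariant set with no
proper nonempty closed invariant subset. -/
def LinearCocycle.IsMinimalSet (Φ : LinearCocycle B E) (S : Set B) : Prop :=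
  S.Nonempty ∧ IsClosed S ∧ (∀ t : ℝ, ∀ x ∈ S, Φ.flow t x ∈ S) ∧
    ∀ S' ⊆ S, S'.Nonempty → IsClosed S' →
      (∀ t : ℝ, ∀ x ∈ S', Φ.flow t x ∈ S') → S' = S

namespace LinearCocycle

variable {B E : Type*} [TopologicalSpace B]
  [NormedAddCommGroup E] [NormedSpace ℝ E]

variable (Φ : LinearCocycle B E)

lemma P_apply (s t : ℝ) (b : B) (v : E) :
    Φ.P s (Φ.flow t b) (Φ.P t b v) = Φ.P (s + t) b v := by
  conv_rhs => rw [← Φ.P_comp s t b]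
  rfl

lemma flow_inv (t : ℝ) (b : B) : Φ.flow (-t) (Φ.flow t b) = b := by
  rw [Φ.flow_add, neg_add_cancel, Φ.flow_zero]

lemma P_cancel (t : ℝ) (b : B) (v : E) :
    Φ.P (-t) (Φ.flow t b) (Φ.P t b v) = v := by
  rw [Φ.P_apply, neg_add_cancel, Φ.P_zero]; rfl

lemma P_inj (t : ℝ) (b : B) : Function.Injective (Φ.P t b) := by
  intro u v h
  have := congrArg (Φ.P (-t) (Φ.flow t b)) h
  rwa [Φ.P_cancel, Φ.P_cancel] at this

/-- The time-`t` map as a linear equivalence. -/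
noncomputable def Pequiv (t : ℝ) (b : B) : E ≃ₗ[ℝ] E :=
  LinearEquiv.ofLinear (Φ.P t b) (Φ.P (-t) (Φ.flow t b))
    (by ext v
        have : Φ.P t (Φ.flow (-t) (Φ.flow t b)) (Φ.P (-t) (Φ.flow t b) v) = v := by
          rw [Φ.P_apply, add_neg_cancel, Φ.P_zero]; rfl
        simpa [Φ.flow_inv t b] using this)
    (by ext v; simpa using Φ.P_cancel t b v)

lemma Pequiv_apply (t : ℝ) (b : B) (v : E) : Φ.Pequiv t b v = Φ.P t b v := rfl

lemma contP : Continuous fun q : ℝ × B × E => Φ.P q.1 q.2.1 q.2.2 := by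
  exact (Φ.P_cont.comp (continuous_fst.prodMk (continuous_fst.comp continuous_snd))).clm_apply
    (continuous_snd.comp continuous_snd)

lemma contPs (s : ℝ) : Continuous fun q : B × E => Φ.P s q.1 q.2 := by
  have := Φ.contP.comp ((continuous_const (y := s)).prodMk continuous_id)
  exact this

lemma mem_stable_iff {b : B} {v : E} :
    v ∈ Φ.stable b ↔ ∃ C : ℝ, ∀ t > (0:ℝ), ‖Φ.P t b v‖ ≤ C := Iff.rfl

lemma mem_unstable_iff {b : B} {v : E} :
    v ∈ Φ.unstable b ↔ ∃ C : ℝ, ∀ t > (0:ℝ), ‖Φ.P (-t) b v‖ ≤ C := Iff.rfl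

end LinearCocycle
namespace LinearCocycle

variable {B E : Type*} [TopologicalSpace B]
  [NormedAddCommGroup E] [NormedSpace ℝ E]

variable (Φ : LinearCocycle B E)

/-- Uniform bound for the operator norms over a compact time interval. -/
lemma localBound [CompactSpace B] (r : ℝ) :
    ∃ L : ℝ, 1 ≤ L ∧ ∀ t : ℝ, |t| ≤ r → ∀ b : B, ‖Φ.P t b‖ ≤ L := by
  have hc : IsCompact (Set.Icc (-r) r ×ˢ (Set.univ : Set B)) :=
    isCompact_Icc.prod isCompact_univ
  have hcont : Continuous fun p : ℝ × B => ‖Φ.P p.1 p.2‖ := Φ.P_cont.norm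
  obtain ⟨L₀, hL₀⟩ := hc.bddAbove_image hcont.continuousOn
  refine ⟨max L₀ 1, le_max_right _ _, fun t ht b => ?_⟩
  refine le_trans ?_ (le_max_left _ _)
  exact hL₀ ⟨(t, b), ⟨abs_le.mp ht, trivial⟩, rfl⟩

/-- A vector with bounded orbit is zero (quasi-hyperbolicity). -/
lemma eq_zero_of_bounded_orbit (hqh : Φ.IsQuasiHyperbolic) {b : B} {v : E}
    {C : ℝ} (h : ∀ t : ℝ, ‖Φ.P t b v‖ ≤ C) : v = 0 := by
  by_contra hv
  obtain ⟨t, ht⟩ := hqh b v hv C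
  exact absurd (h t) (not_le.mpr ht)

/-- The time-reversed cocycle. -/
noncomputable def reverse : LinearCocycle B E where
  flow := fun t b => Φ.flow (-t) b
  flow_cont := Φ.flow_cont.comp ((continuous_neg.comp continuous_fst).prodMk continuous_snd)
  flow_zero := by simpa using Φ.flow_zero
  flow_add := fun s t b => by rw [Φ.flow_add, ← neg_add]
  P := fun t b => Φ.P (-t) b
  P_cont := Φ.P_cont.comp ((continuous_neg.comp continuous_fst).prodMk continuous_snd)
  P_zero := by simpa using Φ.P_zero
  P_comp := fun s t b => by rw [Φ.P_comp, ← neg_add]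

@[simp] lemma reverse_P (t : ℝ) (b : B) : Φ.reverse.P t b = Φ.P (-t) b := rfl
@[simp] lemma reverse_flow (t : ℝ) (b : B) : Φ.reverse.flow t b = Φ.flow (-t) b := rfl

lemma reverse_stable (b : B) : Φ.reverse.stable b = Φ.unstable b := rfl

lemma reverse_unstable (b : B) : Φ.reverse.unstable b = Φ.stable b := by
  ext v
  constructor <;> rintro ⟨C, hC⟩ <;> exact ⟨C, fun t ht => by
    have := hC t ht
    simpa using this⟩

lemma reverse_qh (hqh : Φ.IsQuasiHyperbolic) : Φ.reverse.IsQuasiHyperbolic := by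
  intro b v hv C
  obtain ⟨t, ht⟩ := hqh b v hv C
  exact ⟨-t, by simpa using ht⟩

lemma reverse_minimal {S : Set B} (h : Φ.reverse.IsMinimalSet S) : Φ.IsMinimalSet S := by
  obtain ⟨h1, h2, h3, h4⟩ := h
  refine ⟨h1, h2, fun t x hx => by simpa using h3 (-t) x hx, fun S' hS' hne hcl hinv => ?_⟩
  exact h4 S' hS' hne hcl (fun t x hx => hinv (-t) x hx)

end LinearCocycle
section Extract

open Filter

variable {ι X : Type*} [TopologicalSpace X]

/-- Extract a convergent "subnet": a finer nonbot filter along which the map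
converges to a point of a compact set eventually containing the image. -/
lemma extract_cluster {F : Filter ι} [F.NeBot] (c : ι → X) {K : Set X}
    (hK : IsCompact K) (hc : ∀ᶠ i in F, c i ∈ K) :
    ∃ y ∈ K, ∃ F' : Filter ι, F'.NeBot ∧ F' ≤ F ∧ Tendsto c F' (𝓝 y) := by
  have hle : map c (F ⊓ 𝓟 {i | c i ∈ K}) ≤ 𝓟 K := by
    refine map_le_iff_le_comap.mpr ?_
    exact inf_le_right.trans (by simp [principal_mono]; rfl)
  have hne : (F ⊓ 𝓟 {i | c i ∈ K}).NeBot := inf_principal_neBot_iff.mpr fun U hU =>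
    (hc.and (mem_of_superset hU fun _ h => h)).exists.imp fun i hi => ⟨hi.2, hi.1⟩
  have : (map c (F ⊓ 𝓟 {i | c i ∈ K})).NeBot := map_neBot
  obtain ⟨y, hyK, hy⟩ := hK.exists_clusterPt hle
  refine ⟨y, hyK, (F ⊓ 𝓟 {i | c i ∈ K}) ⊓ comap c (𝓝 y), ?_, inf_le_left.trans inf_le_left, ?_⟩
  · rw [neBot_iff]
    intro hbot
    have : map c ((F ⊓ 𝓟 {i | c i ∈ K}) ⊓ comap c (𝓝 y)) = ⊥ := by rw [hbot, map_bot]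
    rw [Filter.push_pull] at this
    exact hy.ne (by rwa [inf_comm] at this)
  · exact tendsto_comap.mono_left inf_le_right

/-- A limit along a finer filter inherits eventual closed conditions. -/
lemma eventually_le_of_tendsto {F : Filter ι} [F.NeBot] {c : ι → X} {y : X}
    (h : Tendsto c F (𝓝 y)) {f : X → ℝ} (hf : Continuous f) {C : ℝ}
    (hev : ∀ᶠ i in F, f (c i) ≤ C) : f y ≤ C :=
  le_of_tendsto ((hf.tendsto y).comp h) hev

end Extract
namespace LinearCocycle

variable {B E : Type*} [TopologicalSpace B]
  [NormedAddCommGroup E] [NormedSpace ℝ E]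

variable (Φ : LinearCocycle B E)

lemma stable_mem_map [CompactSpace B] (t : ℝ) (b : B) {v : E} (hv : v ∈ Φ.stable b) :
    Φ.P t b v ∈ Φ.stable (Φ.flow t b) := by
  obtain ⟨C, hC⟩ := hv
  obtain ⟨L, hL1, hL⟩ := Φ.localBound (|t|)
  refine ⟨max C (L * ‖v‖), fun s hs => ?_⟩
  rw [Φ.P_apply]
  rcases lt_or_ge 0 (s + t) with h | h
  · exact le_trans (hC _ h) (le_max_left _ _)
  · refine le_trans ?_ (le_max_right _ _)
    calc ‖Φ.P (s + t) b v‖ ≤ ‖Φ.P (s + t) b‖ * ‖v‖ := (Φ.P (s+t) b).le_opNorm v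
    _ ≤ L * ‖v‖ := by
        refine mul_le_mul_of_nonneg_right (hL _ ?_ b) (norm_nonneg v)
        rw [abs_le]
        constructor
        · nlinarith [abs_nonneg t, le_abs_self t, neg_abs_le t]
        · nlinarith [neg_abs_le t, le_abs_self t]

lemma stable_map [CompactSpace B] (t : ℝ) (b : B) :
    (Φ.stable b).map (Φ.P t b : E →ₗ[ℝ] E) = Φ.stable (Φ.flow t b) := by
  apply le_antisymm
  · rintro w ⟨v, hv, rfl⟩
    exact Φ.stable_mem_map t b hv
  · intro w hw
    refine ⟨Φ.P (-t) (Φ.flow t b) w, ?_, ?_⟩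
    · have h := Φ.stable_mem_map (-t) (Φ.flow t b) hw
      rwa [Φ.flow_inv] at h
    · have : Φ.P t (Φ.flow (-t) (Φ.flow t b)) (Φ.P (-t) (Φ.flow t b) w) = w := by
        rw [Φ.P_apply, add_neg_cancel, Φ.P_zero]; rfl
      rw [Φ.flow_inv] at this
      exact this

lemma unstable_mem_map [CompactSpace B] (t : ℝ) (b : B) {v : E} (hv : v ∈ Φ.unstable b) :
    Φ.P t b v ∈ Φ.unstable (Φ.flow t b) := by
  have h := Φ.reverse.stable_mem_map (t := -t) (b := b) (v := v)
  rw [Φ.reverse_stable] at h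
  have h2 := h hv
  rw [Φ.reverse_stable] at h2  -- maybe not needed
  simpa using h2

lemma unstable_map [CompactSpace B] (t : ℝ) (b : B) :
    (Φ.unstable b).map (Φ.P t b : E →ₗ[ℝ] E) = Φ.unstable (Φ.flow t b) := by
  have h := Φ.reverse.stable_map (t := -t) (b := b)
  rw [Φ.reverse_stable] at h
  simpa [Φ.reverse_stable] using h

end LinearCocycle
namespace LinearCocycle

open Filter

variable {B E : Type*} [TopologicalSpace B]
  [NormedAddCommGroup E] [NormedSpace ℝ E]

variable (Φ : LinearCocycle B E)

lemma contP_time (b : B) (v : E) : Continuous fun x : ℝ => Φ.P x b v :=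
  Φ.contP.comp (continuous_id.prodMk (continuous_const (y := (b, v))))

/-- Uniform peak bound: along any forward window, the orbit of a vector is
uniformly dominated by its endpoints. -/
lemma uniformM [CompactSpace B] [FiniteDimensional ℝ E] (hqh : Φ.IsQuasiHyperbolic) :
    ∃ D : ℝ, 1 ≤ D ∧ ∀ (b : B) (v : E) (s t : ℝ), 0 ≤ s → s ≤ t →
      ‖Φ.P s b v‖ ≤ D * max ‖v‖ ‖Φ.P t b v‖ := by
  by_contra hcon
  push_neg at hcon
  have key : ∀ n : ℕ, ∃ (b : B) (v : E) (s t : ℝ), 0 ≤ s ∧ s ≤ t ∧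
      (n + 1 : ℝ) * max ‖v‖ ‖Φ.P t b v‖ < ‖Φ.P s b v‖ := by
    intro n
    obtain ⟨b, v, s, t, hs, hst, hlt⟩ := hcon (n + 1) (by exact_mod_cast Nat.succ_le_succ n.zero_le)
    exact ⟨b, v, s, t, hs, hst, hlt⟩
  choose b v s t hs hst hlt using key
  have hmax : ∀ n : ℕ, ∃ u ∈ Set.Icc (0:ℝ) (t n),
      ∀ x ∈ Set.Icc (0:ℝ) (t n), ‖Φ.P x (b n) (v n)‖ ≤ ‖Φ.P u (b n) (v n)‖ := by
    intro n
    obtain ⟨u, hu, hmx⟩ := isCompact_Icc.exists_isMaxOn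
      (Set.nonempty_Icc.mpr ((hs n).trans (hst n)))
      (Φ.contP_time (b n) (v n)).norm.continuousOn
    exact ⟨u, hu, fun x hx => hmx hx⟩
  choose u hu hpeak using hmax
  set M : ℕ → ℝ := fun n => ‖Φ.P (u n) (b n) (v n)‖ with hM
  have hmaxpos : ∀ n : ℕ, 0 < max ‖v n‖ ‖Φ.P (t n) (b n) (v n)‖ := by
    intro n
    rcases lt_or_eq_of_le ((norm_nonneg (v n)).trans (le_max_left _ ‖Φ.P (t n) (b n) (v n)‖))
      with h | h
    · exact h
    · exfalso
      have hv0 : v n = 0 := by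
        have : ‖v n‖ ≤ (0:ℝ) := h ▸ le_max_left _ _
        exact norm_eq_zero.mp (le_antisymm this (norm_nonneg _))
      have h2 := hlt n
      rw [hv0] at h2
      simp at h2
  have hMlarge : ∀ n : ℕ, (n + 1 : ℝ) * max ‖v n‖ ‖Φ.P (t n) (b n) (v n)‖ < M n :=
    fun n => lt_of_lt_of_le (hlt n) (hpeak n (s n) ⟨hs n, hst n⟩)
  have hMpos : ∀ n : ℕ, 0 < M n := fun n =>
    lt_of_le_of_lt (by positivity) (hMlarge n)
  set c : ℕ → B := fun n => Φ.flow (u n) (b n) with hc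
  set w : ℕ → E := fun n => (M n)⁻¹ • Φ.P (u n) (b n) (v n) with hw
  have hwnorm : ∀ n : ℕ, ‖w n‖ = 1 := by
    intro n
    rw [hw]
    simp only [norm_smul, norm_inv, Real.norm_eq_abs, abs_of_pos (hMpos n)]
    exact inv_mul_cancel₀ (hMpos n).ne'
  -- window bound
  have hwin : ∀ (n : ℕ) (σ : ℝ), -u n ≤ σ → σ ≤ t n - u n → ‖Φ.P σ (c n) (w n)‖ ≤ 1 := by
    intro n σ h1 h2
    rw [hc, hw]
    simp only [map_smul, norm_smul, norm_inv, Real.norm_eq_abs, abs_of_pos (hMpos n)]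
    rw [Φ.P_apply]
    have hb : ‖Φ.P (σ + u n) (b n) (v n)‖ ≤ M n :=
      hpeak n (σ + u n) ⟨by linarith, by linarith⟩
    calc (M n)⁻¹ * ‖Φ.P (σ + u n) (b n) (v n)‖ ≤ (M n)⁻¹ * M n :=
          mul_le_mul_of_nonneg_left hb (by positivity)
      _ = 1 := inv_mul_cancel₀ (hMpos n).ne'
  -- the peak time goes to infinity on both sides
  have hinf : ∀ r : ℝ, 0 ≤ r → ∀ᶠ n : ℕ in atTop, r ≤ u n ∧ r ≤ t n - u n := by
    intro r hr
    obtain ⟨L, hL1, hL⟩ := Φ.localBound r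
    filter_upwards [eventually_ge_atTop ⌈L⌉₊] with n hn
    have hnL : L ≤ (n + 1 : ℝ) := by
      calc L ≤ ⌈L⌉₊ := Nat.le_ceil L
      _ ≤ (n : ℝ) := by exact_mod_cast hn
      _ ≤ (n + 1 : ℝ) := by linarith
    constructor
    · by_contra hcon2
      push_neg at hcon2
      have habs : |u n| ≤ r := abs_le.mpr ⟨by linarith [(hu n).1], hcon2.le⟩
      have : M n ≤ L * ‖v n‖ := by
        calc M n ≤ ‖Φ.P (u n) (b n)‖ * ‖v n‖ := (Φ.P (u n) (b n)).le_opNorm (v n)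
        _ ≤ L * ‖v n‖ := mul_le_mul_of_nonneg_right (hL _ habs _) (norm_nonneg _)
      have h2 : (n + 1 : ℝ) * max ‖v n‖ ‖Φ.P (t n) (b n) (v n)‖ < L * ‖v n‖ :=
        lt_of_lt_of_le (hMlarge n) this
      have h3 : (n + 1 : ℝ) * ‖v n‖ ≤ (n + 1 : ℝ) * max ‖v n‖ ‖Φ.P (t n) (b n) (v n)‖ :=
        mul_le_mul_of_nonneg_left (le_max_left _ _) (by positivity)
      have h4 : L * ‖v n‖ ≤ (n + 1) * ‖v n‖ :=
        mul_le_mul_of_nonneg_right hnL (norm_nonneg _)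
      linarith
    · by_contra hcon2
      push_neg at hcon2
      have habs : |u n - t n| ≤ r := by
        rw [abs_le]
        constructor
        · linarith
        · linarith [(hu n).2]
      have hid : Φ.P (u n - t n) (Φ.flow (t n) (b n)) (Φ.P (t n) (b n) (v n))
          = Φ.P (u n) (b n) (v n) := by
        rw [Φ.P_apply, sub_add_cancel]
      have : M n ≤ L * ‖Φ.P (t n) (b n) (v n)‖ := by
        calc M n = ‖Φ.P (u n - t n) (Φ.flow (t n) (b n)) (Φ.P (t n) (b n) (v n))‖ := by
              rw [hid]
        _ ≤ ‖Φ.P (u n - t n) (Φ.flow (t n) (b n))‖ * ‖Φ.P (t n) (b n) (v n)‖ :=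
              ContinuousLinearMap.le_opNorm _ _
        _ ≤ L * ‖Φ.P (t n) (b n) (v n)‖ :=
              mul_le_mul_of_nonneg_right (hL _ habs _) (norm_nonneg _)
      have h3 : (n + 1 : ℝ) * ‖Φ.P (t n) (b n) (v n)‖
          ≤ (n + 1 : ℝ) * max ‖v n‖ ‖Φ.P (t n) (b n) (v n)‖ :=
        mul_le_mul_of_nonneg_left (le_max_right _ _) (by positivity)
      have h4 : L * ‖Φ.P (t n) (b n) (v n)‖ ≤ (n + 1) * ‖Φ.P (t n) (b n) (v n)‖ :=
        mul_le_mul_of_nonneg_right hnL (norm_nonneg _)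
      linarith [lt_of_lt_of_le (hMlarge n) this]
  -- extract a cluster point
  have hKcomp : IsCompact ((Set.univ : Set B) ×ˢ Metric.sphere (0:E) 1) :=
    isCompact_univ.prod (isCompact_sphere 0 1)
  have hmem : ∀ᶠ n : ℕ in atTop, (c n, w n) ∈ (Set.univ : Set B) ×ˢ Metric.sphere (0:E) 1 :=
    Eventually.of_forall fun n => ⟨trivial, by simp [mem_sphere_iff_norm, hwnorm n]⟩
  obtain ⟨⟨y, wl⟩, hyK, F', hF'ne, hF'le, hF'tendsto⟩ :=
    extract_cluster (fun n => (c n, w n)) hKcomp hmem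
  have hw1 : ‖wl‖ = 1 := by
    have := hyK.2
    simpa [mem_sphere_iff_norm] using this
  have hbdd : ∀ σ : ℝ, ‖Φ.P σ y wl‖ ≤ 1 := by
    intro σ
    have hev : ∀ᶠ n : ℕ in F', ‖Φ.P σ (c n) (w n)‖ ≤ 1 := by
      have := (hinf (|σ|) (abs_nonneg σ)).filter_mono hF'le
      filter_upwards [this] with n hn
      exact hwin n σ (by linarith [neg_abs_le σ, hn.1]) (by linarith [le_abs_self σ, hn.2])
    haveI := hF'ne
    exact eventually_le_of_tendsto hF'tendsto (f := fun p : B × E => ‖Φ.P σ p.1 p.2‖)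
      (Φ.contPs σ).norm hev
  have : wl = 0 := Φ.eq_zero_of_bounded_orbit hqh hbdd
  rw [this] at hw1
  simp at hw1

end LinearCocycle
namespace LinearCocycle

open Filter

variable {B E : Type*} [TopologicalSpace B]
  [NormedAddCommGroup E] [NormedSpace ℝ E]

variable (Φ : LinearCocycle B E)

/-- Uniform bound on forward orbits of stable vectors. -/
lemma uniformK [CompactSpace B] [FiniteDimensional ℝ E] (hqh : Φ.IsQuasiHyperbolic) :
    ∃ K : ℝ, 1 ≤ K ∧ ∀ (b : B) (v : E), v ∈ Φ.stable b → ∀ t : ℝ, 0 ≤ t →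
      ‖Φ.P t b v‖ ≤ K * ‖v‖ := by
  by_contra hcon
  push_neg at hcon
  have key : ∀ n : ℕ, ∃ (b : B) (v : E), v ∈ Φ.stable b ∧ ∃ t : ℝ, 0 ≤ t ∧
      (n + 1 : ℝ) * ‖v‖ < ‖Φ.P t b v‖ := by
    intro n
    obtain ⟨b, v, hv, t, ht, hlt⟩ := hcon (n + 1) (by exact_mod_cast Nat.succ_le_succ n.zero_le)
    exact ⟨b, v, hv, t, ht, hlt⟩
  choose b v hvstable t ht hlt using key
  have hvpos : ∀ n : ℕ, 0 < ‖v n‖ := by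
    intro n
    rcases (norm_nonneg (v n)).lt_or_eq with h | h
    · exact h
    · exfalso
      have : v n = 0 := norm_eq_zero.mp h.symm
      have h2 := hlt n
      rw [this] at h2
      simp at h2
  -- supremum over the forward orbit
  set A : ℕ → Set ℝ := fun n => (fun τ => ‖Φ.P τ (b n) (v n)‖) '' Set.Ici 0 with hA
  have hAne : ∀ n, (A n).Nonempty := fun n => ⟨_, ⟨0, Set.self_mem_Ici, rfl⟩⟩
  have hAbdd : ∀ n, BddAbove (A n) := by
    intro n
    obtain ⟨C, hC⟩ := hvstable n
    refine ⟨max C ‖v n‖, ?_⟩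
    rintro x ⟨τ, hτ, rfl⟩
    rcases lt_or_eq_of_le (Set.mem_Ici.mp hτ) with h | h
    · exact le_trans (hC τ h) (le_max_left _ _)
    · subst h
      show ‖Φ.P 0 (b n) (v n)‖ ≤ max C ‖v n‖
      have h0 : ‖Φ.P 0 (b n) (v n)‖ = ‖v n‖ := by rw [Φ.P_zero]; rfl
      rw [h0]
      exact le_max_right _ _
  set Q : ℕ → ℝ := fun n => sSup (A n) with hQ
  have hQge : ∀ n, ∀ τ : ℝ, 0 ≤ τ → ‖Φ.P τ (b n) (v n)‖ ≤ Q n := fun n τ hτ =>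
    le_csSup (hAbdd n) ⟨τ, hτ, rfl⟩
  have hQbig : ∀ n : ℕ, (n + 1 : ℝ) * ‖v n‖ < Q n := fun n =>
    lt_of_lt_of_le (hlt n) (hQge n (t n) (ht n))
  have hQpos : ∀ n, 0 < Q n := fun n => lt_of_le_of_lt (by positivity) (hQbig n)
  have hsel : ∀ n : ℕ, ∃ τ : ℝ, 0 ≤ τ ∧ Q n / 2 < ‖Φ.P τ (b n) (v n)‖ := by
    intro n
    obtain ⟨x, ⟨τ, hτ, rfl⟩, hx⟩ := exists_lt_of_lt_csSup (hAne n) (half_lt_self (hQpos n))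
    exact ⟨τ, hτ, hx⟩
  choose u hu hN using hsel
  set N : ℕ → ℝ := fun n => ‖Φ.P (u n) (b n) (v n)‖ with hNdef
  have hNpos : ∀ n, 0 < N n := fun n =>
    lt_of_le_of_lt (by linarith [hQpos n] : (0:ℝ) ≤ Q n / 2) (hN n)
  set c : ℕ → B := fun n => Φ.flow (u n) (b n) with hc
  set w : ℕ → E := fun n => (N n)⁻¹ • Φ.P (u n) (b n) (v n) with hw
  have hwnorm : ∀ n : ℕ, ‖w n‖ = 1 := by
    intro n
    rw [hw]
    simp only [norm_smul, norm_inv, Real.norm_eq_abs, abs_of_pos (hNpos n)]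
    exact inv_mul_cancel₀ (hNpos n).ne'
  have hwin : ∀ (n : ℕ) (σ : ℝ), -u n ≤ σ → ‖Φ.P σ (c n) (w n)‖ ≤ 2 := by
    intro n σ h1
    rw [hc, hw]
    simp only [map_smul, norm_smul, norm_inv, Real.norm_eq_abs, abs_of_pos (hNpos n)]
    rw [Φ.P_apply]
    calc (N n)⁻¹ * ‖Φ.P (σ + u n) (b n) (v n)‖ ≤ (N n)⁻¹ * Q n :=
          mul_le_mul_of_nonneg_left (hQge n _ (by linarith)) (by positivity)
      _ ≤ (N n)⁻¹ * (2 * N n) := mul_le_mul_of_nonneg_left (by linarith [hN n]) (by positivity)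
      _ = 2 := by rw [mul_comm 2 (N n), ← mul_assoc, inv_mul_cancel₀ (hNpos n).ne', one_mul]
  have hinf : ∀ r : ℝ, 0 ≤ r → ∀ᶠ n : ℕ in atTop, r ≤ u n := by
    intro r hr
    obtain ⟨L, hL1, hL⟩ := Φ.localBound r
    filter_upwards [eventually_ge_atTop ⌈2 * L⌉₊] with n hn
    by_contra hcon2
    push_neg at hcon2
    have habs : |u n| ≤ r := abs_le.mpr ⟨by linarith [hu n], hcon2.le⟩
    have h1 : N n ≤ L * ‖v n‖ :=
      le_trans ((Φ.P (u n) (b n)).le_opNorm (v n))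
        (mul_le_mul_of_nonneg_right (hL _ habs _) (norm_nonneg _))
    have h2 : (n + 1 : ℝ) * ‖v n‖ / 2 < N n := by
      have := hN n
      have h3 := hQbig n
      linarith
    have hnL : 2 * L ≤ (n + 1 : ℝ) := by
      calc 2 * L ≤ ⌈2 * L⌉₊ := Nat.le_ceil _
      _ ≤ (n : ℝ) := by exact_mod_cast hn
      _ ≤ (n + 1 : ℝ) := by linarith
    nlinarith [hvpos n]
  have hKcomp : IsCompact ((Set.univ : Set B) ×ˢ Metric.sphere (0:E) 1) :=
    isCompact_univ.prod (isCompact_sphere 0 1)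
  have hmem : ∀ᶠ n : ℕ in atTop, (c n, w n) ∈ (Set.univ : Set B) ×ˢ Metric.sphere (0:E) 1 :=
    Eventually.of_forall fun n => ⟨trivial, by simp [mem_sphere_iff_norm, hwnorm n]⟩
  obtain ⟨⟨y, wl⟩, hyK, F', hF'ne, hF'le, hF'tendsto⟩ :=
    extract_cluster (fun n => (c n, w n)) hKcomp hmem
  have hw1 : ‖wl‖ = 1 := by simpa [mem_sphere_iff_norm] using hyK.2
  have hbdd : ∀ σ : ℝ, ‖Φ.P σ y wl‖ ≤ 2 := by
    intro σ
    have hev : ∀ᶠ n : ℕ in F', ‖Φ.P σ (c n) (w n)‖ ≤ 2 := by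
      have := (hinf (|σ|) (abs_nonneg σ)).filter_mono hF'le
      filter_upwards [this] with n hn
      exact hwin n σ (by linarith [neg_abs_le σ])
    haveI := hF'ne
    exact eventually_le_of_tendsto hF'tendsto (f := fun p : B × E => ‖Φ.P σ p.1 p.2‖)
      (Φ.contPs σ).norm hev
  have : wl = 0 := Φ.eq_zero_of_bounded_orbit hqh hbdd
  rw [this] at hw1
  simp at hw1

/-- Uniform bound on backward orbits of unstable vectors. -/
lemma uniformK' [CompactSpace B] [FiniteDimensional ℝ E] (hqh : Φ.IsQuasiHyperbolic) :
    ∃ K : ℝ, 1 ≤ K ∧ ∀ (b : B) (v : E), v ∈ Φ.unstable b → ∀ t : ℝ, 0 ≤ t →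
      ‖Φ.P (-t) b v‖ ≤ K * ‖v‖ := by
  obtain ⟨K, hK1, hK⟩ := Φ.reverse.uniformK (Φ.reverse_qh hqh)
  exact ⟨K, hK1, fun b v hv t ht => hK b v (by rwa [Φ.reverse_stable]) t ht⟩

end LinearCocycle
namespace LinearCocycle

open Filter

variable {B E : Type*} [TopologicalSpace B]
  [NormedAddCommGroup E] [NormedSpace ℝ E]

variable (Φ : LinearCocycle B E)

/-- Some time uniformly quarters stable vectors. -/
lemma halvingS [CompactSpace B] [FiniteDimensional ℝ E] (hqh : Φ.IsQuasiHyperbolic) :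
    ∃ T : ℝ, 0 < T ∧ ∀ (b : B) (v : E), v ∈ Φ.stable b → ‖Φ.P T b v‖ ≤ (1/4) * ‖v‖ := by
  obtain ⟨K, hK1, hK⟩ := Φ.uniformK hqh
  by_contra hcon
  push_neg at hcon
  have key : ∀ n : ℕ, ∃ (b : B) (v : E), v ∈ Φ.stable b ∧
      (1/4 : ℝ) * ‖v‖ < ‖Φ.P (n+1) b v‖ := by
    intro n
    obtain ⟨b, v, hv, hlt⟩ := hcon ((n : ℝ)+1) (by positivity)
    exact ⟨b, v, hv, hlt⟩
  choose b v hvstable hlt using key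
  set N : ℕ → ℝ := fun n => ‖Φ.P ((n:ℝ)+1) (b n) (v n)‖ with hNdef
  have hvpos : ∀ n : ℕ, 0 < ‖v n‖ := by
    intro n
    rcases (norm_nonneg (v n)).lt_or_eq with h | h
    · exact h
    · exfalso
      have h0 : v n = 0 := norm_eq_zero.mp h.symm
      have h2 := hlt n
      rw [h0] at h2
      simp at h2
  have hNpos : ∀ n, 0 < N n := fun n =>
    lt_of_le_of_lt (by positivity : (0:ℝ) ≤ (1/4) * ‖v n‖) (hlt n)
  set c : ℕ → B := fun n => Φ.flow ((n:ℝ)+1) (b n) with hc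
  set w : ℕ → E := fun n => (N n)⁻¹ • Φ.P ((n:ℝ)+1) (b n) (v n) with hw
  have hwnorm : ∀ n : ℕ, ‖w n‖ = 1 := by
    intro n
    rw [hw]
    simp only [norm_smul, norm_inv, Real.norm_eq_abs, abs_of_pos (hNpos n)]
    exact inv_mul_cancel₀ (hNpos n).ne'
  have hwin : ∀ (n : ℕ) (σ : ℝ), -((n:ℝ)+1) ≤ σ → ‖Φ.P σ (c n) (w n)‖ ≤ 4 * K := by
    intro n σ h1
    rw [hc, hw]
    simp only [map_smul, norm_smul, norm_inv, Real.norm_eq_abs, abs_of_pos (hNpos n)]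
    rw [Φ.P_apply]
    have hb : ‖Φ.P (σ + ((n:ℝ)+1)) (b n) (v n)‖ ≤ K * ‖v n‖ :=
      hK (b n) (v n) (hvstable n) _ (by linarith)
    have hv4 : ‖v n‖ ≤ 4 * N n := by
      have := hlt n
      linarith
    calc (N n)⁻¹ * ‖Φ.P (σ + ((n:ℝ)+1)) (b n) (v n)‖ ≤ (N n)⁻¹ * (K * (4 * N n)) := by
          refine mul_le_mul_of_nonneg_left (hb.trans ?_) (by positivity)
          exact mul_le_mul_of_nonneg_left hv4 (by linarith)
      _ = 4 * K := by field_simp [(hNpos n).ne']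
  have hKcomp : IsCompact ((Set.univ : Set B) ×ˢ Metric.sphere (0:E) 1) :=
    isCompact_univ.prod (isCompact_sphere 0 1)
  have hmem : ∀ᶠ n : ℕ in atTop, (c n, w n) ∈ (Set.univ : Set B) ×ˢ Metric.sphere (0:E) 1 :=
    Eventually.of_forall fun n => ⟨trivial, by simp [mem_sphere_iff_norm, hwnorm n]⟩
  obtain ⟨⟨y, wl⟩, hyK, F', hF'ne, hF'le, hF'tendsto⟩ :=
    extract_cluster (fun n => (c n, w n)) hKcomp hmem
  have hw1 : ‖wl‖ = 1 := by simpa [mem_sphere_iff_norm] using hyK.2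
  have hbdd : ∀ σ : ℝ, ‖Φ.P σ y wl‖ ≤ 4 * K := by
    intro σ
    have hev : ∀ᶠ n : ℕ in F', ‖Φ.P σ (c n) (w n)‖ ≤ 4 * K := by
      have hev0 : ∀ᶠ n : ℕ in atTop, |σ| ≤ (n:ℝ) + 1 := by
        filter_upwards [eventually_ge_atTop ⌈|σ|⌉₊] with n hn
        calc |σ| ≤ ⌈|σ|⌉₊ := Nat.le_ceil _
        _ ≤ (n:ℝ) := by exact_mod_cast hn
        _ ≤ (n:ℝ) + 1 := by linarith
      filter_upwards [hev0.filter_mono hF'le] with n hn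
      exact hwin n σ (by linarith [neg_abs_le σ])
    haveI := hF'ne
    exact eventually_le_of_tendsto hF'tendsto (f := fun p : B × E => ‖Φ.P σ p.1 p.2‖)
      (Φ.contPs σ).norm hev
  have : wl = 0 := Φ.eq_zero_of_bounded_orbit hqh hbdd
  rw [this] at hw1
  simp at hw1

/-- Uniform contraction of stable vectors for all large times. -/
lemma contractS [CompactSpace B] [FiniteDimensional ℝ E] (hqh : Φ.IsQuasiHyperbolic) :
    ∃ T₀ : ℝ, 0 < T₀ ∧ ∀ t : ℝ, T₀ ≤ t → ∀ (b : B) (v : E), v ∈ Φ.stable b →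
      ‖Φ.P t b v‖ ≤ (1/4) * ‖v‖ := by
  obtain ⟨K, hK1, hK⟩ := Φ.uniformK hqh
  obtain ⟨T, hT, hhalf⟩ := Φ.halvingS hqh
  -- iterate the quartering
  have iter : ∀ (j : ℕ) (b : B) (v : E), v ∈ Φ.stable b →
      ‖Φ.P ((j:ℝ) * T) b v‖ ≤ (1/4:ℝ)^j * ‖v‖ := by
    intro j
    induction j with
    | zero => intro b v _; simp [Φ.P_zero]
    | succ j ih =>
      intro b v hv
      have hvj : Φ.P ((j:ℝ) * T) b v ∈ Φ.stable (Φ.flow ((j:ℝ)*T) b) :=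
        Φ.stable_mem_map _ _ hv
      have hid : Φ.P T (Φ.flow ((j:ℝ)*T) b) (Φ.P ((j:ℝ)*T) b v)
          = Φ.P (((j:ℕ)+1:ℝ) * T) b v := by
        rw [Φ.P_apply]
        ring_nf
      calc ‖Φ.P (((j+1:ℕ):ℝ) * T) b v‖
          = ‖Φ.P T (Φ.flow ((j:ℝ)*T) b) (Φ.P ((j:ℝ)*T) b v)‖ := by
            rw [hid]
            push_cast
            ring_nf
        _ ≤ (1/4) * ‖Φ.P ((j:ℝ)*T) b v‖ := hhalf _ _ hvj
        _ ≤ (1/4) * ((1/4:ℝ)^j * ‖v‖) := by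
            have := ih b v hv
            linarith
        _ = (1/4:ℝ)^(j+1) * ‖v‖ := by ring
  obtain ⟨j, hj⟩ : ∃ j : ℕ, (1/4:ℝ)^j < 1/(4*K) := by
    refine exists_pow_lt_of_lt_one (by positivity) (by norm_num)
  refine ⟨((j:ℝ)+1) * T, by positivity, fun t ht b v hv => ?_⟩
  have hjt : (j:ℝ) * T ≤ t := by
    nlinarith
  have hvj : Φ.P ((j:ℝ) * T) b v ∈ Φ.stable (Φ.flow ((j:ℝ)*T) b) :=
    Φ.stable_mem_map _ _ hv
  have hid : Φ.P (t - (j:ℝ)*T) (Φ.flow ((j:ℝ)*T) b) (Φ.P ((j:ℝ)*T) b v) = Φ.P t b v := by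
    rw [Φ.P_apply]; ring_nf
  calc ‖Φ.P t b v‖ = ‖Φ.P (t - (j:ℝ)*T) (Φ.flow ((j:ℝ)*T) b) (Φ.P ((j:ℝ)*T) b v)‖ := by
        rw [hid]
    _ ≤ K * ‖Φ.P ((j:ℝ)*T) b v‖ := hK _ _ hvj _ (by linarith)
    _ ≤ K * ((1/4:ℝ)^j * ‖v‖) := by
        have := iter j b v hv
        nlinarith [norm_nonneg (Φ.P ((j:ℝ)*T) b v)]
    _ ≤ (1/4) * ‖v‖ := by
        have hKpos : (0:ℝ) < K := by linarith
        have hKid : K * (1/(4*K)) = 1/4 := by field_simp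
        have h1 : K * (1/4:ℝ)^j ≤ 1/4 := by
          nlinarith [mul_lt_mul_of_pos_left hj hKpos]
        nlinarith [norm_nonneg v]

/-- Uniform contraction of unstable vectors backwards for all large times. -/
lemma contractU [CompactSpace B] [FiniteDimensional ℝ E] (hqh : Φ.IsQuasiHyperbolic) :
    ∃ T₀ : ℝ, 0 < T₀ ∧ ∀ t : ℝ, T₀ ≤ t → ∀ (b : B) (v : E), v ∈ Φ.unstable b →
      ‖Φ.P (-t) b v‖ ≤ (1/4) * ‖v‖ := by
  obtain ⟨T₀, hT₀, h⟩ := Φ.reverse.contractS (Φ.reverse_qh hqh)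
  exact ⟨T₀, hT₀, fun t ht b v hv => h t ht b v (by rwa [Φ.reverse_stable])⟩

end LinearCocycle
namespace LinearCocycle

open Filter

variable {B E : Type*} [TopologicalSpace B]
  [NormedAddCommGroup E] [NormedSpace ℝ E]

variable (Φ : LinearCocycle B E)

/-- The ω-limit set of a point (set of cluster values of the forward orbit). -/
def omegaSet (b : B) : Set B := {y | MapClusterPt y atTop fun t : ℝ => Φ.flow t b}

lemma contFlow (t : ℝ) : Continuous fun x : B => Φ.flow t x :=
  Φ.flow_cont.comp ((continuous_const (y := t)).prodMk continuous_id)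

lemma omegaSet_nonempty [CompactSpace B] (b : B) : (Φ.omegaSet b).Nonempty := by
  obtain ⟨y, hy⟩ := exists_clusterPt_of_compactSpace (map (fun t : ℝ => Φ.flow t b) atTop)
  exact ⟨y, hy⟩

lemma omegaSet_closed (b : B) : IsClosed (Φ.omegaSet b) :=
  isClosed_setOf_clusterPt

lemma omegaSet_invariant (b : B) (t : ℝ) {y : B} (hy : y ∈ Φ.omegaSet b) :
    Φ.flow t y ∈ Φ.omegaSet b := by
  have h1 : MapClusterPt (Φ.flow t y) atTop ((fun x => Φ.flow t x) ∘ fun s : ℝ => Φ.flow s b) :=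
    MapClusterPt.continuousAt_comp (Φ.contFlow t).continuousAt hy
  have h2 : ((fun x => Φ.flow t x) ∘ fun s : ℝ => Φ.flow s b)
      = (fun s : ℝ => Φ.flow s b) ∘ (fun s : ℝ => t + s) := by
    funext s
    simp only [Function.comp_apply]
    rw [Φ.flow_add]
  rw [h2] at h1
  exact h1.of_comp (tendsto_atTop_add_const_left atTop t tendsto_id)

/-- Every nonempty closed invariant set contains a minimal set. -/
lemma exists_minimal_subset [CompactSpace B] {Ω : Set B} (hne : Ω.Nonempty)
    (hcl : IsClosed Ω) (hinv : ∀ t : ℝ, ∀ x ∈ Ω, Φ.flow t x ∈ Ω) :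
    ∃ S, Φ.IsMinimalSet S ∧ S ⊆ Ω := by
  set 𝒮 : Set (Set B) :=
    {C | C.Nonempty ∧ IsClosed C ∧ (∀ t : ℝ, ∀ x ∈ C, Φ.flow t x ∈ C) ∧ C ⊆ Ω} with h𝒮
  have hzorn := zorn_superset_nonempty 𝒮 ?_ Ω ⟨hne, hcl, hinv, Set.Subset.rfl⟩
  · obtain ⟨S, hSΩ, hS𝒮, hSmin⟩ := hzorn
    obtain ⟨hSne, hScl, hSinv, hSsub⟩ := hS𝒮
    refine ⟨S, ⟨hSne, hScl, hSinv, fun S' hS' hne' hcl' hinv' => ?_⟩, hSsub⟩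
    exact Set.Subset.antisymm hS' (hSmin ⟨hne', hcl', hinv', hS'.trans hSsub⟩ hS')
  · rintro c hc hchain ⟨C₀, hC₀⟩
    refine ⟨⋂ C : c, (C : Set B), ⟨?_, ?_, ?_, ?_⟩, fun C hC => Set.iInter_subset_of_subset ⟨C, hC⟩ le_rfl⟩
    · haveI : Nonempty c := ⟨⟨C₀, hC₀⟩⟩
      apply IsCompact.nonempty_iInter_of_directed_nonempty_isCompact_isClosed
      · intro i j
        rcases hchain.total i.2 j.2 with h | h
        · exact ⟨i, le_rfl, h⟩
        · exact ⟨j, h, le_rfl⟩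
      · exact fun i => (hc i.2).1
      · exact fun i => (hc i.2).2.1.isCompact
      · exact fun i => (hc i.2).2.1
    · exact isClosed_iInter fun i => (hc i.2).2.1
    · intro t x hx
      simp only [Set.mem_iInter] at hx ⊢
      exact fun i => (hc i.2).2.2.1 t x (hx i)
    · intro x hx
      simp only [Set.mem_iInter] at hx
      exact (hc (⟨C₀, hC₀⟩ : c).2).2.2.2 (hx ⟨C₀, hC₀⟩)

lemma exists_minimal_in_omega [CompactSpace B] (b : B) :
    ∃ S, Φ.IsMinimalSet S ∧ S ⊆ Φ.omegaSet b :=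
  Φ.exists_minimal_subset (Φ.omegaSet_nonempty b) (Φ.omegaSet_closed b)
    (fun t x hx => Φ.omegaSet_invariant b t hx)

end LinearCocycle
section Frame

open Module

variable {E : Type*} [NormedAddCommGroup E] [NormedSpace ℝ E] [FiniteDimensional ℝ E]

/-- Every subspace of a finite-dimensional real normed space admits a tuple of
vectors spanning it whose images under `toEuclidean` are orthonormal. -/
lemma exists_euclid_frame (V : Submodule ℝ E) :
    ∃ f : Fin (finrank ℝ V) → E, (∀ j, f j ∈ V) ∧
      Orthonormal ℝ (fun j => toEuclidean (f j)) := by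
  classical
  set e : E ≃L[ℝ] EuclideanSpace ℝ (Fin (finrank ℝ E)) := toEuclidean with he
  set Z : Submodule ℝ (EuclideanSpace ℝ (Fin (finrank ℝ E))) :=
    V.map (e.toLinearEquiv : E →ₗ[ℝ] EuclideanSpace ℝ (Fin (finrank ℝ E))) with hZ
  have hZr : finrank ℝ Z = finrank ℝ V :=
    LinearEquiv.finrank_map_eq e.toLinearEquiv V
  set bb := stdOrthonormalBasis ℝ Z with hbb
  refine ⟨fun j => e.symm ((bb (finCongr hZr.symm j) : Z) :
      EuclideanSpace ℝ (Fin (finrank ℝ E))), ?_, ?_⟩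
  · intro j
    have hmem : ((bb (finCongr hZr.symm j) : Z) : EuclideanSpace ℝ (Fin (finrank ℝ E))) ∈ Z :=
      Submodule.coe_mem _
    obtain ⟨v, hv, hve⟩ := Submodule.mem_map.mp hmem
    show e.symm ((bb (finCongr hZr.symm j) : Z) : EuclideanSpace ℝ (Fin (finrank ℝ E))) ∈ V
    have h2 : e.symm ((bb (finCongr hZr.symm j) : Z) : EuclideanSpace ℝ (Fin (finrank ℝ E))) = v := by
      rw [← hve]
      exact e.symm_apply_apply v
    rw [h2]
    exact hv
  · rw [orthonormal_iff_ite]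
    intro i j
    rw [show ∀ x : EuclideanSpace ℝ (Fin (finrank ℝ E)), e (e.symm x) = x from e.apply_symm_apply]
    rw [show ∀ x : EuclideanSpace ℝ (Fin (finrank ℝ E)), e (e.symm x) = x from e.apply_symm_apply]
    rw [← Submodule.coe_inner]
    rw [orthonormal_iff_ite.mp bb.orthonormal]
    congr 1
    simp only [eq_iff_iff]
    exact ⟨fun h => (finCongr hZr.symm).injective h, fun h => by rw [h]⟩

end Frame
namespace LinearCocycle

open Filter Module

variable {B E : Type*} [TopologicalSpace B]
  [NormedAddCommGroup E] [NormedSpace ℝ E]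

variable (Φ : LinearCocycle B E)

lemma Pequiv_coe (t : ℝ) (b : B) :
    (Φ.Pequiv t b : E →ₗ[ℝ] E) = (Φ.P t b : E →ₗ[ℝ] E) := rfl

lemma stable_disjoint (hqh : Φ.IsQuasiHyperbolic) (b : B) :
    Disjoint (Φ.stable b) (Φ.unstable b) := by
  rw [Submodule.disjoint_def]
  intro v hvs hvu
  obtain ⟨C₁, hC₁⟩ := hvs
  obtain ⟨C₂, hC₂⟩ := hvu
  refine Φ.eq_zero_of_bounded_orbit hqh (C := max (max C₁ C₂) ‖v‖) (b := b) ?_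
  intro t
  rcases lt_trichotomy t 0 with h | h | h
  · have h2 := hC₂ (-t) (by linarith)
    rw [neg_neg] at h2
    exact h2.trans ((le_max_right C₁ C₂).trans (le_max_left _ _))
  · rw [h]
    have : Φ.P 0 b v = v := by rw [Φ.P_zero]; rfl
    rw [this]
    exact le_max_right _ _
  · exact (hC₁ t h).trans ((le_max_left C₁ C₂).trans (le_max_left _ _))

set_option maxHeartbeats 2000000 in
/-- Core dimension-transfer lemma: at any ω-limit point, the unstable space has
dimension at least the codimension of the stable space at the base point. -/
lemma dim_transfer [CompactSpace B] [FiniteDimensional ℝ E] (hqh : Φ.IsQuasiHyperbolic)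
    (b : B) {y : B} (hy : y ∈ Φ.omegaSet b) :
    finrank ℝ E ≤ finrank ℝ (Φ.stable b) + finrank ℝ (Φ.unstable y) := by
  classical
  obtain ⟨D, hD1, hD⟩ := Φ.uniformM hqh
  obtain ⟨W, hW⟩ := Submodule.exists_isCompl (Φ.stable b)
  have hmr : finrank ℝ (Φ.stable b) + finrank ℝ W = finrank ℝ E :=
    Submodule.finrank_add_eq_of_isCompl hW
  set r := finrank ℝ W with hr
  -- uniform expansion on W
  have hexp : ∃ S : ℝ, 0 ≤ S ∧ ∀ τ, S ≤ τ → ∀ v ∈ W, 2 * ‖v‖ ≤ ‖Φ.P τ b v‖ := by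
    set sW : Set E := (W : Set E) ∩ Metric.sphere (0:E) 1 with hsW
    have hsWc : IsCompact sW := by
      refine (isCompact_sphere (0:E) 1).of_isClosed_subset
        (IsClosed.inter W.closed_of_finiteDimensional Metric.isClosed_sphere) ?_
      exact Set.inter_subset_right
    have hnotst : ∀ v : E, v ∈ sW → ∃ τ : ℝ, 0 < τ ∧ 2 * D < ‖Φ.P τ b v‖ := by
      rintro v ⟨hvW, hvs⟩
      have hv1 : ‖v‖ = 1 := by simpa [mem_sphere_iff_norm] using hvs
      have hvnot : v ∉ Φ.stable b := by
        intro hvst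
        have : v = 0 := (Submodule.disjoint_def.mp hW.disjoint.symm) v hvW hvst
        rw [this] at hv1; simp at hv1
      rw [mem_stable_iff] at hvnot
      push_neg at hvnot
      obtain ⟨τ, hτpos, hτ⟩ := hvnot (2 * D)
      exact ⟨τ, hτpos, hτ⟩
    choose tv htvpos htv using hnotst
    set U : sW → Set E := fun i => {u : E | 2 * D < ‖Φ.P (tv i i.2) b u‖} with hU
    have hUopen : ∀ i, IsOpen (U i) :=
      fun i => isOpen_lt continuous_const ((Φ.P (tv i i.2) b).continuous.norm)
    have hcover : sW ⊆ ⋃ i : sW, U i := fun v hv =>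
      Set.mem_iUnion.mpr ⟨⟨v, hv⟩, htv v hv⟩
    obtain ⟨s, hs⟩ := hsWc.elim_finite_subcover U hUopen hcover
    set S : ℝ := 1 + ((s.sup fun i => ⌈tv i i.2⌉₊ : ℕ) : ℝ) with hS
    refine ⟨S, by positivity, fun τ hτ v hvW => ?_⟩
    rcases eq_or_ne v 0 with rfl | hv0
    · simp
    · have hvn : 0 < ‖v‖ := norm_pos_iff.mpr hv0
      set u : E := ‖v‖⁻¹ • v with hu
      have huW : u ∈ W := W.smul_mem _ hvW
      have hun : ‖u‖ = 1 := by
        rw [hu, norm_smul, norm_inv, norm_norm, inv_mul_cancel₀ hvn.ne']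
      have husW : u ∈ sW := ⟨huW, by simpa [mem_sphere_iff_norm] using hun⟩
      obtain ⟨i, his, hiu⟩ := Set.mem_iUnion₂.mp (hs husW)
      have hiu' : 2 * D < ‖Φ.P (tv i i.2) b u‖ := hiu
      have htle : tv i i.2 ≤ τ := by
        have h1 : tv i i.2 ≤ (⌈tv i i.2⌉₊ : ℝ) := Nat.le_ceil _
        have h2 : ((⌈tv i i.2⌉₊ : ℕ) : ℝ) ≤ ((s.sup fun i => ⌈tv i i.2⌉₊ : ℕ) : ℝ) :=
          Nat.cast_le.mpr (Finset.le_sup (f := fun i : ↥sW => ⌈tv i i.2⌉₊) his)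
        simp only [hS] at hτ
        linarith
      have hM := hD b u (tv i i.2) τ (htvpos i i.2).le htle
      rw [hun] at hM
      have hmax : 2 < max 1 ‖Φ.P τ b u‖ := by
        by_contra hcon2
        push_neg at hcon2
        nlinarith
      have hX : 2 ≤ ‖Φ.P τ b u‖ := by
        rcases le_or_gt ‖Φ.P τ b u‖ 1 with h | h
        · rw [max_eq_left h] at hmax; linarith
        · rcases le_or_gt ‖Φ.P τ b u‖ 2 with h2 | h2
          · rw [max_eq_right h.le] at hmax; linarith
          · linarith
      have hPu : Φ.P τ b u = ‖v‖⁻¹ • Φ.P τ b v := by rw [hu, map_smul]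
      rw [hPu, norm_smul, norm_inv, norm_norm] at hX
      have h3 : ‖v‖ * (‖v‖⁻¹ * ‖Φ.P τ b v‖) = ‖Φ.P τ b v‖ := by
        field_simp
      nlinarith [mul_le_mul_of_nonneg_left hX hvn.le]
  obtain ⟨S, hS0, hSexp⟩ := hexp
  set Wt : ℝ → Submodule ℝ E := fun τ => W.map (Φ.P τ b : E →ₗ[ℝ] E) with hWtdef
  have hWt : ∀ τ, finrank ℝ (Wt τ) = r := by
    intro τ
    have h0 : (Φ.P τ b : E →ₗ[ℝ] E) = (Φ.Pequiv τ b : E →ₗ[ℝ] E) := rfl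
    rw [hWtdef]
    simp only [h0]
    exact LinearEquiv.finrank_map_eq (R := ℝ) (Φ.Pequiv τ b) W
  have hframe := fun τ : ℝ => exists_euclid_frame (Wt τ)
  choose f hfmem hfON using hframe
  set g : ℝ → Fin r → E := fun τ j => f τ (finCongr (hWt τ).symm j) with hgdef
  have hONg : ∀ τ, Orthonormal ℝ fun j : Fin r => toEuclidean (g τ j) := by
    intro τ
    exact (hfON τ).comp _ (finCongr (hWt τ).symm).injective
  have hgmem : ∀ τ j, ∃ v ∈ W, Φ.P τ b v = g τ j := by
    intro τ j
    have h1 : g τ j ∈ Wt τ := hfmem τ _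
    obtain ⟨v, hv, hve⟩ := Submodule.mem_map.mp h1
    exact ⟨v, hv, hve⟩
  set R : ℝ := ‖((toEuclidean (E := E)).symm :
      EuclideanSpace ℝ (Fin (finrank ℝ E)) →L[ℝ] E)‖ with hRdef
  have hR0 : 0 ≤ R := norm_nonneg _
  have hgnorm : ∀ τ j, ‖g τ j‖ ≤ R := by
    intro τ j
    have h1 : ‖toEuclidean (g τ j)‖ = 1 := (hONg τ).1 j
    calc ‖g τ j‖ = ‖((toEuclidean (E := E)).symm :
          EuclideanSpace ℝ (Fin (finrank ℝ E)) →L[ℝ] E) (toEuclidean (g τ j))‖ := by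
          rw [ContinuousLinearEquiv.coe_coe, (toEuclidean (E := E)).symm_apply_apply]
      _ ≤ R * ‖toEuclidean (g τ j)‖ := ContinuousLinearMap.le_opNorm _ _
      _ = R := by rw [h1, mul_one]
  have hback : ∀ τ, S ≤ τ → ∀ σ : ℝ, 0 ≤ σ → σ ≤ τ → ∀ j,
      ‖Φ.P (-σ) (Φ.flow τ b) (g τ j)‖ ≤ D * R := by
    intro τ hτ σ hσ0 hστ j
    obtain ⟨v, hvW, hveq⟩ := hgmem τ j
    have hPvR : ‖Φ.P τ b v‖ ≤ R := by rw [hveq]; exact hgnorm τ j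
    have hvn : 2 * ‖v‖ ≤ R := le_trans (hSexp τ hτ v hvW) hPvR
    have hid : Φ.P (-σ) (Φ.flow τ b) (g τ j) = Φ.P (τ - σ) b v := by
      rw [← hveq, Φ.P_apply]
      ring_nf
    rw [hid]
    calc ‖Φ.P (τ - σ) b v‖ ≤ D * max ‖v‖ ‖Φ.P τ b v‖ :=
          hD b v (τ - σ) τ (by linarith) (by linarith)
      _ ≤ D * R := by
          refine mul_le_mul_of_nonneg_left ?_ (by linarith)
          rw [max_le_iff]
          exact ⟨by linarith, hPvR⟩
  -- pass to the limit along a subnet converging to `y`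
  set F₀ : Filter ℝ := (atTop : Filter ℝ) ⊓ comap (fun τ => Φ.flow τ b) (𝓝 y) with hF₀def
  haveI hF₀ne : F₀.NeBot := by
    rw [neBot_iff]
    intro hbot
    have h1 : map (fun τ => Φ.flow τ b) F₀ = ⊥ := by rw [hbot, Filter.map_bot]
    rw [hF₀def, Filter.push_pull] at h1
    exact (hy.clusterPt).ne (by rwa [inf_comm] at h1)
  have htendflow : Tendsto (fun τ => Φ.flow τ b) F₀ (𝓝 y) :=
    tendsto_comap.mono_left inf_le_right
  have hmemK : ∀ᶠ τ in F₀, g τ ∈ Set.pi Set.univ fun _ : Fin r => Metric.closedBall (0:E) R :=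
    Eventually.of_forall fun τ => by
      intro j _
      simpa [Metric.mem_closedBall, dist_zero_right] using hgnorm τ j
  obtain ⟨gl, hglK, F', hF'ne, hF'le, hF'tend⟩ :=
    extract_cluster g (isCompact_univ_pi fun _ => isCompact_closedBall (0:E) R) hmemK
  haveI := hF'ne
  have htf : Tendsto (fun τ => Φ.flow τ b) F' (𝓝 y) := htendflow.mono_left hF'le
  have htg : ∀ j, Tendsto (fun τ => g τ j) F' (𝓝 (gl j)) := by
    intro j
    exact (tendsto_pi_nhds.mp hF'tend) j
  have hONl : Orthonormal ℝ fun j : Fin r => toEuclidean (gl j) := by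
    rw [orthonormal_iff_ite]
    intro i j
    have hcont : Continuous fun p : E × E =>
        (inner ℝ (toEuclidean p.1) (toEuclidean p.2) : ℝ) :=
      continuous_inner.comp ((toEuclidean.continuous.comp continuous_fst).prodMk
        (toEuclidean.continuous.comp continuous_snd))
    have ht2 : Tendsto (fun τ => (inner ℝ (toEuclidean (g τ i)) (toEuclidean (g τ j)) : ℝ)) F'
        (𝓝 (inner ℝ (toEuclidean (gl i)) (toEuclidean (gl j)))) :=
      (hcont.tendsto _).comp ((htg i).prodMk_nhds (htg j))
    have heq : (fun τ => (inner ℝ (toEuclidean (g τ i)) (toEuclidean (g τ j)) : ℝ))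
        = fun _ => if i = j then (1:ℝ) else 0 := by
      funext τ
      exact orthonormal_iff_ite.mp (hONg τ) i j
    rw [heq] at ht2
    exact tendsto_nhds_unique ht2 tendsto_const_nhds
  have hglu : ∀ j, gl j ∈ Φ.unstable y := by
    intro j
    refine ⟨D * R, fun σ hσ => ?_⟩
    have hev : ∀ᶠ τ in F', ‖Φ.P (-σ) (Φ.flow τ b) (g τ j)‖ ≤ D * R := by
      have h1 : ∀ᶠ τ in (atTop : Filter ℝ), S ≤ τ ∧ σ ≤ τ :=
        (eventually_ge_atTop S).and (eventually_ge_atTop σ)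
      have h2 := h1.filter_mono (hF'le.trans inf_le_left)
      filter_upwards [h2] with τ hτ
      exact hback τ hτ.1 σ hσ.le hτ.2 j
    have hcont : Continuous fun p : B × E => ‖Φ.P (-σ) p.1 p.2‖ := (Φ.contPs (-σ)).norm
    exact le_of_tendsto ((hcont.tendsto _).comp (htf.prodMk_nhds (htg j))) hev
  have hli : LinearIndependent ℝ gl := by
    have h1 : LinearIndependent ℝ fun j => toEuclidean (gl j) := hONl.linearIndependent
    exact LinearIndependent.of_comp
      ((toEuclidean (E := E)).toLinearEquiv : E →ₗ[ℝ] EuclideanSpace ℝ (Fin (finrank ℝ E))) h1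
  have hspan : Submodule.span ℝ (Set.range gl) ≤ Φ.unstable y :=
    Submodule.span_le.mpr (Set.range_subset_iff.mpr hglu)
  have hrank : finrank ℝ (Submodule.span ℝ (Set.range gl)) = r := by
    rw [finrank_span_eq_card hli, Fintype.card_fin]
  have hfin : r ≤ finrank ℝ (Φ.unstable y) := hrank ▸ Submodule.finrank_mono hspan
  omega

end LinearCocycle
namespace LinearCocycle

open Filter Module

variable {B E : Type*} [TopologicalSpace B]
  [NormedAddCommGroup E] [NormedSpace ℝ E]

variable (Φ : LinearCocycle B E)

lemma sum_le (hqh : Φ.IsQuasiHyperbolic) [FiniteDimensional ℝ E] (b : B) :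
    finrank ℝ (Φ.stable b) + finrank ℝ (Φ.unstable b) ≤ finrank ℝ E := by
  have h := Submodule.finrank_sup_add_finrank_inf_eq (Φ.stable b) (Φ.unstable b)
  rw [(Φ.stable_disjoint hqh b).eq_bot, finrank_bot] at h
  have h2 := Submodule.finrank_le (Φ.stable b ⊔ Φ.unstable b)
  omega

lemma isCompl_stable_unstable [CompactSpace B] [FiniteDimensional ℝ E]
    (hqh : Φ.IsQuasiHyperbolic) (k : ℕ)
    (hmin : ∀ S : Set B, Φ.IsMinimalSet S → ∀ x ∈ S, finrank ℝ (Φ.stable x) = k)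
    (b : B) : IsCompl (Φ.stable b) (Φ.unstable b) := by
  have hdisj := Φ.stable_disjoint hqh b
  -- forward: stable dimension is at least k
  obtain ⟨M, hM, hMsub⟩ := Φ.exists_minimal_in_omega b
  obtain ⟨y, hyM⟩ := hM.1
  have h1 := Φ.dim_transfer hqh b (hMsub hyM)
  have hysk : finrank ℝ (Φ.stable y) = k := hmin M hM y hyM
  have hsumy := Φ.sum_le hqh y
  -- backward: unstable dimension is at least n - k
  obtain ⟨M', hM', hM'sub⟩ := Φ.reverse.exists_minimal_in_omega b
  obtain ⟨y', hy'M⟩ := hM'.1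
  have h2 := Φ.reverse.dim_transfer (Φ.reverse_qh hqh) b (hM'sub hy'M)
  rw [Φ.reverse_stable, Φ.reverse_unstable] at h2
  have hy'k : finrank ℝ (Φ.stable y') = k := hmin M' (Φ.reverse_minimal hM') y' hy'M
  have hsumb := Φ.sum_le hqh b
  -- combine
  have hsum_eq : finrank ℝ (Φ.stable b) + finrank ℝ (Φ.unstable b) = finrank ℝ E := by omega
  refine ⟨hdisj, codisjoint_iff.mpr ?_⟩
  apply Submodule.eq_top_of_finrank_eq
  have h3 := Submodule.finrank_sup_add_finrank_inf_eq (Φ.stable b) (Φ.unstable b)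
  rw [hdisj.eq_bot, finrank_bot] at h3
  omega

theorem isHyperbolicOn_univ [CompactSpace B] [FiniteDimensional ℝ E]
    (hqh : Φ.IsQuasiHyperbolic) (k : ℕ)
    (hmin : ∀ S : Set B, Φ.IsMinimalSet S → ∀ x ∈ S, finrank ℝ (Φ.stable x) = k) :
    Φ.IsHyperbolicOn Set.univ := by
  rcases isEmpty_or_nonempty B with hB | hB
  · exact ⟨fun _ => ⊥, fun _ => ⊥,
      fun t b hb => (IsEmpty.false b).elim,
      fun t b hb => (IsEmpty.false b).elim,
      fun b hb => (IsEmpty.false b).elim,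
      1, one_pos, fun b hb => (IsEmpty.false b).elim⟩
  obtain ⟨T₁, hT₁, hc1⟩ := Φ.contractS hqh
  obtain ⟨T₂, hT₂, hc2⟩ := Φ.contractU hqh
  refine ⟨Φ.stable, Φ.unstable,
    fun t b _ => Φ.stable_map t b,
    fun t b _ => Φ.unstable_map t b,
    fun b _ => Φ.isCompl_stable_unstable hqh k hmin b,
    max T₁ T₂, lt_max_of_lt_left hT₁, fun b _ => ⟨?_, ?_⟩⟩
  · intro v hv hv0
    have h := hc1 (max T₁ T₂) (le_max_left _ _) b v hv
    have : 0 < ‖v‖ := norm_pos_iff.mpr hv0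
    calc ‖Φ.P (max T₁ T₂) b v‖ ≤ (1/4) * ‖v‖ := h
      _ < (1/2) * ‖v‖ := by linarith
  · intro v hv hv0
    have h := hc2 (max T₁ T₂) (le_max_right _ _) b v hv
    have : 0 < ‖v‖ := norm_pos_iff.mpr hv0
    calc ‖Φ.P (-(max T₁ T₂)) b v‖ ≤ (1/4) * ‖v‖ := h
      _ < (1/2) * ‖v‖ := by linarith

end LinearCocycle

/-- If the dimension of the stable subspace of a quasi-hyperbolic continuous
linear cocycle over a compact base is constant on all minimal sets of the
base flow, then the cocycle is hyperbolic on the whole bundle. -/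
theorem quasi_hyperbolic_hyperbolic_of_const_dim_on_minimals
    [CompactSpace B] [FiniteDimensional ℝ E]
    (Φ : LinearCocycle B E) (hqh : Φ.IsQuasiHyperbolic)
    (k : ℕ)
    (hmin : ∀ S : Set B, Φ.IsMinimalSet S → ∀ x ∈ S,
      Module.finrank ℝ (Φ.stable x) = k) :
    Φ.IsHyperbolicOn Set.univ := by
  exact Φ.isHyperbolicOn_univ hqh k hmin
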